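/- Let $P$ and $Q$ be probability measures on a measurable space and $E$ a measurable event. Then $P(E^c) + Q(E) \ge \tfrac{1}{2} \exp(-\mathrm{KL}(P, Q))$. -/

import Mathlib

open MeasureTheory
open scoped Classical

/-- Kullback–Leibler divergence `KL(P, Q) = ∫ log (dP/dQ) dP`, valued in `ℝ≥0∞`,
equal to `+∞` when `P` is not absolutely continuous w.r.t. `Q` (or the
log-likelihood ratio is not integrable). -/
noncomputable def klDiv' {α : Type*} [MeasurableSpace α] (P Q : Measure α) : ENNReal :=
  if P ≪ Q ∧ Integrable (llr P Q) P then ENNReal.ofReal (∫ x, llr P Q x ∂P) else ⊤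

/-- `exp(-x)` for `x : ℝ≥0∞`, with `exp(-∞) = 0`. -/
noncomputable def expNeg (x : ENNReal) : ENNReal :=
  if x = ⊤ then 0 else ENNReal.ofReal (Real.exp (-x.toReal))

/-- the Bretagnolle–Huber inequality
`P(Eᶜ) + Q(E) ≥ (1/2) exp(-KL(P,Q))`. -/
theorem stmt14 {α : Type*} [MeasurableSpace α] (P Q : Measure α)
    [IsProbabilityMeasure P] [IsProbabilityMeasure Q]
    (E : Set α) (hE : MeasurableSet E) :
    2⁻¹ * expNeg (klDiv' P Q) ≤ P Eᶜ + Q E := by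
  by_cases hc : P ≪ Q ∧ Integrable (llr P Q) P
  swap
  · simp [klDiv', hc, expNeg]
  obtain ⟨hac, hint⟩ := hc
  set p : α → ENNReal := P.rnDeriv Q with hp
  have hpm : Measurable p := Measure.measurable_rnDeriv P Q
  set K : ℝ := ∫ x, llr P Q x ∂P with hK
  have hKL : klDiv' P Q = ENNReal.ofReal K := by
    simp [klDiv', hac, hint]
    rfl
  rw [hKL, expNeg, if_neg ENNReal.ofReal_ne_top]
  -- reduce to the inequality with exponent `-K`
  have hmax : Real.exp (-(ENNReal.ofReal K).toReal) ≤ Real.exp (-K) := by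
    rcases le_or_gt 0 K with h | h
    · rw [ENNReal.toReal_ofReal h]
    · rw [ENNReal.ofReal_of_nonpos h.le]
      simpa using h.le
  -- the key quantity: `S = ∫ √(dP/dQ) dQ`
  set S : ENNReal := ∫⁻ x, p x ^ (1/2 : ℝ) ∂Q with hS
  -- pointwise bound `√p ≤ p + 1`
  have hsqrt_le : ∀ x : α, p x ^ (1/2 : ℝ) ≤ p x + 1 := by
    intro x
    rcases le_total (p x) 1 with h | h
    · exact le_trans (ENNReal.rpow_le_one h (by norm_num)) le_add_self
    · calc p x ^ (1/2 : ℝ) ≤ p x ^ (1 : ℝ) :=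
            ENNReal.rpow_le_rpow_of_exponent_le h (by norm_num)
        _ = p x := by rw [ENNReal.rpow_one]
        _ ≤ p x + 1 := le_self_add
  have hplus : ∫⁻ x, (p x + 1) ∂Q = 2 := by
    rw [lintegral_add_right _ measurable_const, Measure.lintegral_rnDeriv hac]
    simp [one_add_one_eq_two]
  have hS_le : S ≤ 2 := by
    rw [hS, ← hplus]
    exact lintegral_mono hsqrt_le
  have hS_ne_top : S ≠ ⊤ := (lt_of_le_of_lt hS_le (by norm_num)).ne
  -- the function `h x = exp(-llr x / 2)`
  set h : α → ℝ := fun x => Real.exp (-llr P Q x / 2) with hh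
  have hh_meas : Measurable h := (((measurable_llr P Q).neg).div_const 2).exp
  -- a.e. `P`, `ofReal (h x) = p x ^ (-(1/2))`
  have h_ae : ∀ᵐ x ∂P, ENNReal.ofReal (h x) = p x ^ (-(1/2) : ℝ) := by
    filter_upwards [Measure.rnDeriv_pos hac, hac.ae_le (Measure.rnDeriv_lt_top P Q)]
      with x hx hx'
    have htpos : 0 < (p x).toReal := ENNReal.toReal_pos hx.ne' hx'.ne
    have h1 : h x = (p x).toReal ^ (-(1/2) : ℝ) := by
      rw [hh, Real.rpow_def_of_pos htpos]
      simp only [llr]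
      ring_nf
      rfl
    rw [h1, ← ENNReal.ofReal_rpow_of_pos htpos, ENNReal.ofReal_toReal hx'.ne]
  -- `∫⁻ ofReal (h x) ∂P = S`
  have key : ∫⁻ x, ENNReal.ofReal (h x) ∂P = S := by
    rw [lintegral_congr_ae h_ae]
    rw [← MeasureTheory.lintegral_rnDeriv_mul hac ((hpm.pow_const _).aemeasurable)]
    refine lintegral_congr_ae ?_
    filter_upwards [Measure.rnDeriv_lt_top P Q] with x hx'
    show p x * p x ^ (-(1/2) : ℝ) = p x ^ (1/2 : ℝ)
    rcases eq_or_ne (p x) 0 with h0 | h0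
    · rw [h0, zero_mul, ENNReal.zero_rpow_of_pos (by norm_num : (0:ℝ) < 1/2)]
    · rw [show p x * p x ^ (-(1/2) : ℝ) = p x ^ (1:ℝ) * p x ^ (-(1/2) : ℝ) by
        rw [ENNReal.rpow_one], ← ENNReal.rpow_add _ _ h0 hx'.ne]
      norm_num
  -- integrability of `h`
  have hh_int : Integrable h P := by
    refine ⟨hh_meas.aestronglyMeasurable, ?_⟩
    rw [hasFiniteIntegral_iff_norm]
    have : ∀ x, ENNReal.ofReal ‖h x‖ = ENNReal.ofReal (h x) := by
      intro x; rw [Real.norm_of_nonneg (Real.exp_nonneg _)]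
    simp_rw [this, key]
    exact lt_of_le_of_lt hS_le (by norm_num)
  -- Jensen's inequality
  have hf_int : Integrable (fun x => -llr P Q x / 2) P := (hint.neg).div_const 2
  have hjensen : Real.exp (-K / 2) ≤ ∫ x, h x ∂P := by
    have := convexOn_exp.map_integral_le (μ := P) (f := fun x => -llr P Q x / 2)
      Real.continuous_exp.continuousOn isClosed_univ
      (Filter.Eventually.of_forall fun x => Set.mem_univ _) hf_int
      (by exact hh_int)
    have heq : ∫ x, -llr P Q x / 2 ∂P = -K / 2 := by
      rw [integral_div, integral_neg, hK]
    rwa [heq] at this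
  -- `ofReal (exp (-K/2)) ≤ S`
  have hA : ENNReal.ofReal (Real.exp (-K / 2)) ≤ S := by
    refine ENNReal.ofReal_le_of_le_toReal ?_
    have hint_eq : ∫ x, h x ∂P = (∫⁻ x, ENNReal.ofReal (h x) ∂P).toReal := by
      rw [integral_eq_lintegral_of_nonneg_ae
        (Filter.Eventually.of_forall fun x => Real.exp_nonneg _)
        hh_meas.aestronglyMeasurable]
    rw [hint_eq, key] at hjensen
    exact hjensen
  -- Cauchy–Schwarz step
  set A : ENNReal := ∫⁻ x, min (p x) 1 ∂Q with hAdef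
  set B : ENNReal := ∫⁻ x, max (p x) 1 ∂Q with hBdef
  have hCS : S ≤ A ^ (1/2 : ℝ) * B ^ (1/2 : ℝ) := by
    have hpt : ∀ x, p x ^ (1/2 : ℝ)
        = (fun x => min (p x) 1 ^ (1/2 : ℝ)) x * (fun x => max (p x) 1 ^ (1/2 : ℝ)) x := by
      intro x
      rw [← ENNReal.mul_rpow_of_nonneg _ _ (by norm_num : (0:ℝ) ≤ 1/2), min_mul_max, mul_one]
    have h22 : (2:ℝ).HolderConjugate 2 := Real.HolderConjugate.two_two
    have := ENNReal.lintegral_mul_le_Lp_mul_Lq Q h22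
      (f := fun x => min (p x) 1 ^ (1/2 : ℝ)) (g := fun x => max (p x) 1 ^ (1/2 : ℝ))
      (((hpm.min measurable_const).pow_const _).aemeasurable)
      (((hpm.max measurable_const).pow_const _).aemeasurable)
    have hfix : ∀ (q : α → ENNReal) (x : α), (q x ^ (1/2 : ℝ)) ^ (2:ℝ) = q x := by
      intro q x
      rw [← ENNReal.rpow_mul]
      norm_num
    simp only [Pi.mul_apply] at this
    calc S = ∫⁻ x, (fun x => min (p x) 1 ^ (1/2 : ℝ)) x * (fun x => max (p x) 1 ^ (1/2 : ℝ)) x ∂Q := by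
            rw [hS]; exact lintegral_congr fun x => hpt x
      _ ≤ (∫⁻ x, (min (p x) 1 ^ (1/2:ℝ)) ^ (2:ℝ) ∂Q) ^ (1/2:ℝ)
            * (∫⁻ x, (max (p x) 1 ^ (1/2:ℝ)) ^ (2:ℝ) ∂Q) ^ (1/2:ℝ) := this
      _ = A ^ (1/2:ℝ) * B ^ (1/2:ℝ) := by
            have e1 : ∫⁻ x, (min (p x) 1 ^ (1/2:ℝ)) ^ (2:ℝ) ∂Q = A :=
              lintegral_congr fun x => hfix (fun x => min (p x) 1) x
            have e2 : ∫⁻ x, (max (p x) 1 ^ (1/2:ℝ)) ^ (2:ℝ) ∂Q = B :=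
              lintegral_congr fun x => hfix (fun x => max (p x) 1) x
            rw [e1, e2]
  have hAle : A ≤ P Eᶜ + Q E := by
    rw [hAdef, ← lintegral_add_compl (fun x => min (p x) 1) hE]
    have h1 : ∫⁻ x in E, min (p x) 1 ∂Q ≤ Q E := by
      calc ∫⁻ x in E, min (p x) 1 ∂Q ≤ ∫⁻ _ in E, 1 ∂Q := lintegral_mono fun x => min_le_right _ _
        _ = Q E := by simp
    have h2 : ∫⁻ x in Eᶜ, min (p x) 1 ∂Q ≤ P Eᶜ := by
      calc ∫⁻ x in Eᶜ, min (p x) 1 ∂Q ≤ ∫⁻ x in Eᶜ, p x ∂Q :=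
            lintegral_mono fun x => min_le_left _ _
        _ = P Eᶜ := Measure.setLIntegral_rnDeriv hac Eᶜ
    calc ∫⁻ x in E, min (p x) 1 ∂Q + ∫⁻ x in Eᶜ, min (p x) 1 ∂Q ≤ Q E + P Eᶜ := add_le_add h1 h2
      _ = P Eᶜ + Q E := add_comm _ _
  have hBle : B ≤ 2 := by
    rw [hBdef, ← hplus]
    refine lintegral_mono fun x => ?_
    exact max_le le_self_add le_add_self
  -- assemble: `ofReal (exp (-K)) ≤ 2 * (P Eᶜ + Q E)`
  have hsq : ∀ y : ENNReal, y ^ (1/2:ℝ) * y ^ (1/2:ℝ) = y := by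
    intro y
    rw [← ENNReal.rpow_add_of_nonneg _ _ (by norm_num) (by norm_num)]
    norm_num
  have hmain : ENNReal.ofReal (Real.exp (-K)) ≤ 2 * (P Eᶜ + Q E) := by
    have hexpand : ENNReal.ofReal (Real.exp (-K))
        = ENNReal.ofReal (Real.exp (-K/2)) * ENNReal.ofReal (Real.exp (-K/2)) := by
      rw [← ENNReal.ofReal_mul (Real.exp_nonneg _), ← Real.exp_add]
      norm_num
    calc ENNReal.ofReal (Real.exp (-K))
        = ENNReal.ofReal (Real.exp (-K/2)) * ENNReal.ofReal (Real.exp (-K/2)) := hexpand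
      _ ≤ S * S := mul_le_mul' hA hA
      _ ≤ (A ^ (1/2:ℝ) * B ^ (1/2:ℝ)) * (A ^ (1/2:ℝ) * B ^ (1/2:ℝ)) := mul_le_mul' hCS hCS
      _ = (A ^ (1/2:ℝ) * A ^ (1/2:ℝ)) * (B ^ (1/2:ℝ) * B ^ (1/2:ℝ)) := by ring
      _ = A * B := by rw [hsq, hsq]
      _ ≤ (P Eᶜ + Q E) * 2 := mul_le_mul' hAle hBle
      _ = 2 * (P Eᶜ + Q E) := mul_comm _ _
  calc 2⁻¹ * ENNReal.ofReal (Real.exp (-(ENNReal.ofReal K).toReal))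
      ≤ 2⁻¹ * ENNReal.ofReal (Real.exp (-K)) :=
        mul_le_mul' le_rfl (ENNReal.ofReal_le_ofReal hmax)
    _ ≤ 2⁻¹ * (2 * (P Eᶜ + Q E)) := mul_le_mul' le_rfl hmain
    _ = P Eᶜ + Q E := by
        rw [← mul_assoc, ENNReal.inv_mul_cancel (by norm_num) (by norm_num), one_mul]
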